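/- Ruin comparison before the first alarm: for every t with 0 < t ≤ A_1, one has Δ(t) = ψ(u_0, t) − ψ(u_0 + Σ_{j=1}^k e^{−r A_j} u_j, t). Moreover, if ψ̄(u_0, A_1) ≥ 1−β (the survival condition attained at the first alarm), then 0 ≤ Δ(t) ≤ ψ(u_0, A_1) − ψ(u_0 + Σ_{j=1}^k e^{−r A_j} u_j, t) ≤ β − ψ(u_0 + e^{−r t} Σ_{j=1}^k u_j, t) ≤ β. -/

import Mathlib

open MeasureTheory ProbabilityTheory Set

noncomputable section

/-- The net outgo process `R` of a Cramér–Lundberg model (compound Poisson minus linear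
premium): `R 0 = 0`, càdlàg (right-continuous) paths, stationary independent increments,
each `R t` measurable. -/
structure CLProcess (Ω : Type) [MeasurableSpace Ω] (P : Measure Ω) where
  R : ℝ → Ω → ℝ
  meas : ∀ t, Measurable (R t)
  zero : ∀ ω, R 0 ω = 0
  cadlag : ∀ ω t, ContinuousWithinAt (fun s => R s ω) (Set.Ici t) t
  indep_incr : ∀ a : ℝ, 0 ≤ a →
    IndepFun (fun ω (s : ℝ) => R (a + s) ω - R a ω)
      (fun ω (s : Set.Icc (0:ℝ) a) => R s.1 ω) P
  stat_incr : ∀ a : ℝ, 0 ≤ a →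
    P.map (fun ω (s : ℝ) => R (a + s) ω - R a ω) = P.map (fun ω (s : ℝ) => R s ω)

variable {Ω : Type} [MeasurableSpace Ω]

/-- infinite-horizon ruin probability `ψ(u) = P[sup_{t>0} R_t > u]` -/
def psiInf (P : Measure Ω) (M : CLProcess Ω P) (u : ℝ) : ℝ :=
  (P {ω | ∃ t ∈ Set.Ioi (0:ℝ), M.R t ω > u}).toReal

/-- infinite-horizon survival probability `ψ̄(u) = 1 − ψ(u)` -/
def psiBarInf (P : Measure Ω) (M : CLProcess Ω P) (u : ℝ) : ℝ := 1 - psiInf P M u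

/-- finite-horizon ruin probability `ψ(u,t) = P[sup_{0<s≤t} R_s > u]` -/
def psiFin (P : Measure Ω) (M : CLProcess Ω P) (u t : ℝ) : ℝ :=
  (P {ω | ∃ s ∈ Set.Ioc (0:ℝ) t, M.R s ω > u}).toReal

/-- finite-horizon survival probability `ψ̄(u,t) = 1 − ψ(u,t)` -/
def psiBarFin (P : Measure Ω) (M : CLProcess Ω P) (u t : ℝ) : ℝ := 1 - psiFin P M u t

/-- Capital level `l^i_t` of the comparison model `M^i`:
`l^i_t = Σ_{j=0}^m u_j` if `t ∈ (A_m, A_{m+1}]` for some `m < i` (equivalently `t ≤ A_i`,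
where `m` is the largest index with `A_m < t`), and
`l^i_t = Σ_{j=0}^i u_j + Σ_{j=i+1}^k u_j·e^{−r(A_j−A_i)}` for `t > A_i`
(with the convention `A_{k+1} = ∞`). -/
def lvl (A u : ℕ → ℝ) (r : ℝ) (k i : ℕ) (t : ℝ) : ℝ :=
  if A i < t then
    (∑ j ∈ Finset.range (i + 1), u j)
      + ∑ j ∈ Finset.Icc (i + 1) k, u j * Real.exp (-(r * (A j - A i)))
  else
    ∑ j ∈ Finset.range (((Finset.range (k + 1)).filter (fun m => A m < t)).card), u j

/-- `P[T^{M^i} ≤ t]`: finite-time ruin probability of the comparison model `M^i`,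
whose ruin time is `T^{M^i} = inf{t>0 : R_t > l^i_t}`. -/
def modelRuin (P : Measure Ω) (M : CLProcess Ω P) (A u : ℕ → ℝ) (r : ℝ) (k i : ℕ)
    (t : ℝ) : ℝ :=
  (P {ω | ∃ s ∈ Set.Ioc (0:ℝ) t, M.R s ω > lvl A u r k i s}).toReal

/-- `Δ(t) := P[T^{M^k} ≤ t] − P[T^{M_r} ≤ t]`, where `M_r = M^0` is the no-alarm model. -/
def Delta (P : Measure Ω) (M : CLProcess Ω P) (A u : ℕ → ℝ) (r : ℝ) (k : ℕ) (t : ℝ) : ℝ :=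
  modelRuin P M A u r k k t - modelRuin P M A u r k 0 t

lemma psiFin_mono (P : Measure Ω) [IsProbabilityMeasure P] (M : CLProcess Ω P)
    {u₁ u₂ t₁ t₂ : ℝ} (hu : u₁ ≤ u₂) (ht : t₂ ≤ t₁) :
    psiFin P M u₂ t₂ ≤ psiFin P M u₁ t₁ := by
  apply ENNReal.toReal_mono (measure_ne_top _ _)
  apply measure_mono
  rintro ω ⟨s, hs, h⟩
  exact ⟨s, ⟨hs.1, hs.2.trans ht⟩, lt_of_le_of_lt hu h⟩

lemma psiFin_nonneg (P : Measure Ω) (M : CLProcess Ω P) (u t : ℝ) :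
    0 ≤ psiFin P M u t := ENNReal.toReal_nonneg

/-- ruin comparison before the first alarm. For `0 < t ≤ A_1`,
`Δ(t) = ψ(u_0,t) − ψ(u_0 + Σ_{j=1}^k e^{−rA_j}u_j, t)`; and if `ψ̄(u_0,A_1) ≥ 1−β`, then
`0 ≤ Δ(t) ≤ ψ(u_0,A_1) − ψ(u_0 + Σ_{j=1}^k e^{−rA_j}u_j, t)`
`≤ β − ψ(u_0 + e^{−rt}Σ_{j=1}^k u_j, t) ≤ β`. -/
theorem ruin_comparison_before_first_alarm
    (P : Measure Ω) [IsProbabilityMeasure P] (M : CLProcess Ω P)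
    (A u : ℕ → ℝ) (r β : ℝ) (k : ℕ) (hk : 1 ≤ k)
    (hA0 : A 0 = 0) (hAmono : ∀ i, i < k → A i < A (i + 1))
    (hu : ∀ j, 0 < u j) (hr : 0 < r) (hβ : 0 < β ∧ β < 1)
    (t : ℝ) (ht0 : 0 < t) (ht1 : t ≤ A 1) :
    Delta P M A u r k t
        = psiFin P M (u 0) t
          - psiFin P M (u 0 + ∑ j ∈ Finset.Icc 1 k, Real.exp (-(r * A j)) * u j) t
    ∧ (1 - psiFin P M (u 0) (A 1) ≥ 1 - β →
        0 ≤ Delta P M A u r k t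
        ∧ Delta P M A u r k t
            ≤ psiFin P M (u 0) (A 1)
              - psiFin P M (u 0 + ∑ j ∈ Finset.Icc 1 k, Real.exp (-(r * A j)) * u j) t
        ∧ psiFin P M (u 0) (A 1)
              - psiFin P M (u 0 + ∑ j ∈ Finset.Icc 1 k, Real.exp (-(r * A j)) * u j) t
            ≤ β - psiFin P M (u 0 + Real.exp (-(r * t)) * ∑ j ∈ Finset.Icc 1 k, u j) t
        ∧ β - psiFin P M (u 0 + Real.exp (-(r * t)) * ∑ j ∈ Finset.Icc 1 k, u j) t ≤ β) := by
  have hAle : ∀ i j : ℕ, i ≤ j → j ≤ k → A i ≤ A j := by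
    intro i j hij
    induction hij with
    | refl => exact fun _ => le_rfl
    | @step m h ih =>
      intro hk'
      exact (ih (Nat.le_of_succ_le hk')).trans
        (hAmono m (Nat.lt_of_succ_le hk')).le
  set S := ∑ j ∈ Finset.Icc 1 k, Real.exp (-(r * A j)) * u j with hS
  have hSnonneg : 0 ≤ S :=
    Finset.sum_nonneg fun j _ => mul_nonneg (Real.exp_pos _).le (hu j).le
  have hlvl0 : ∀ s : ℝ, 0 < s → lvl A u r k 0 s = u 0 + S := by
    intro s hs
    rw [lvl, if_pos (by rw [hA0]; exact hs)]
    rw [Finset.sum_range_one]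
    congr 1
    apply Finset.sum_congr rfl
    intro j _
    rw [hA0, sub_zero, mul_comm]
  have hlvlk : ∀ s : ℝ, 0 < s → s ≤ A 1 → lvl A u r k k s = u 0 := by
    intro s hs hsA
    have hk1 : A 1 ≤ A k := hAle 1 k hk le_rfl
    rw [lvl, if_neg (not_lt.2 (hsA.trans hk1))]
    have hfil : (Finset.range (k + 1)).filter (fun m => A m < s) = {0} := by
      ext m
      simp only [Finset.mem_filter, Finset.mem_range, Finset.mem_singleton]
      constructor
      · rintro ⟨hm, hlt⟩
        by_contra h
        have hm1 : 1 ≤ m := Nat.one_le_iff_ne_zero.2 h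
        have : A 1 ≤ A m := hAle 1 m hm1 (Nat.lt_succ_iff.1 hm)
        linarith
      · rintro rfl
        exact ⟨Nat.succ_pos k, by rw [hA0]; exact hs⟩
    rw [hfil]
    simp
  have h0 : modelRuin P M A u r k 0 t = psiFin P M (u 0 + S) t := by
    unfold modelRuin psiFin
    congr 2
    ext ω
    simp only [Set.mem_setOf_eq]
    constructor
    · rintro ⟨s, hs, h⟩
      exact ⟨s, hs, by rwa [hlvl0 s hs.1] at h⟩
    · rintro ⟨s, hs, h⟩
      exact ⟨s, hs, by rwa [hlvl0 s hs.1]⟩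
  have hk' : modelRuin P M A u r k k t = psiFin P M (u 0) t := by
    unfold modelRuin psiFin
    congr 2
    ext ω
    simp only [Set.mem_setOf_eq]
    constructor
    · rintro ⟨s, hs, h⟩
      exact ⟨s, hs, by rwa [hlvlk s hs.1 (hs.2.trans ht1)] at h⟩
    · rintro ⟨s, hs, h⟩
      exact ⟨s, hs, by rwa [hlvlk s hs.1 (hs.2.trans ht1)]⟩
  have hDelta : Delta P M A u r k t = psiFin P M (u 0) t - psiFin P M (u 0 + S) t := by
    rw [Delta, h0, hk']
  refine ⟨hDelta, fun hsurv => ?_⟩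
  have hψβ : psiFin P M (u 0) (A 1) ≤ β := by linarith
  have hmono1 : psiFin P M (u 0 + S) t ≤ psiFin P M (u 0) t :=
    psiFin_mono P M (by linarith) le_rfl
  have hmono2 : psiFin P M (u 0) t ≤ psiFin P M (u 0) (A 1) :=
    psiFin_mono P M le_rfl ht1
  have hSle : S ≤ Real.exp (-(r * t)) * ∑ j ∈ Finset.Icc 1 k, u j := by
    rw [Finset.mul_sum]
    apply Finset.sum_le_sum
    intro j hj
    have hj1 : 1 ≤ j := (Finset.mem_Icc.1 hj).1
    have hjk : j ≤ k := (Finset.mem_Icc.1 hj).2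
    have : A 1 ≤ A j := hAle 1 j hj1 hjk
    have hexp : Real.exp (-(r * A j)) ≤ Real.exp (-(r * t)) := by
      apply Real.exp_le_exp.2
      nlinarith
    exact mul_le_mul_of_nonneg_right hexp (hu j).le
  have hmono3 : psiFin P M (u 0 + Real.exp (-(r * t)) * ∑ j ∈ Finset.Icc 1 k, u j) t
      ≤ psiFin P M (u 0 + S) t :=
    psiFin_mono P M (by linarith) le_rfl
  refine ⟨by rw [hDelta]; linarith, by rw [hDelta]; linarith, by linarith,
    by have := psiFin_nonneg P M (u 0 + Real.exp (-(r * t)) * ∑ j ∈ Finset.Icc 1 k, u j) t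
       linarith⟩
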